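/- Let 𝒜 be the A∞-category of the 4-punctured sphere and let M be a peculiar module (curved type D structure over 𝒜∂ with curvature p⁴+q⁴). Then the twisted complex 𝓛(M) = ⊕_{j=1}^4 (ι_j·𝒜∂_op ⊗ M) ⊗ L_j with structure map δ(b ⊗ m ⊗ L_j) = b·∂_M(m) ⊗ id_{L_j} + p·b ⊗ m ⊗ u_{j,j+1} + q·b ⊗ m ⊗ v_{j,j−1} satisfies the twisted-complex Maurer–Cartan equation: μ^tw₁ applied to δ vanishes. -/

import Mathlib

/-!
**Statement 15.** Let `𝒜` be the A∞-category of the 4-punctured sphere and let `M` be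
a peculiar module (a curved type D structure over the peculiar algebra `𝒜∂` with
curvature `p⁴ + q⁴`).  Then the twisted complex
`𝓛(M) = ⊕_{j=1}^4 (ι_j·𝒜∂ᵒᵖ ⊗_ℐ M) ⊗ L_j` with structure map
`δ(b ⊗ m ⊗ L_j) = b·∂_M(m) ⊗ id_{L_j} + p·b ⊗ m ⊗ u_{j,j+1} + q·b ⊗ m ⊗ v_{j,j−1}`
satisfies the twisted-complex Maurer–Cartan equation `∑_{k≥1} μ_k(δ, …, δ) = 0`.

Everything is encoded basis-theoretically.  The A∞-category `𝒜` is as in statements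
13/14 (`IsMu` below).  The basis of `𝒜∂` consists of paths `(s, d) : PathB`
(start `s ∈ ℤ/4` and signed length `d`: `d ≥ 0` a `q`-path, `d ≤ 0` a `p`-path),
with partial product `mulP`; `𝒜∂ᵒᵖ`-basis elements `(a)⁻¹` are encoded by the same
paths, and the module actions are the partial division actions: `frontAct` is
`(a)⁻¹ · dc` (removing a coefficient of `∂_M` from the front of `a`), and
`backP`/`backQ` are `p·(a)⁻¹` and `q·(a)⁻¹` (removing a single `p` / `q` from the
back of `a`).  The peculiar module `M` is given by a finite generating set `G` with
idempotents `idem` and differential coefficients `d : G → G → 𝒜∂`, with curvature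
`∂_M² = (p⁴ + q⁴) ⊗ 1` (`hcurv`).  The generators of `𝓛(M)` are pairs
`(a, x) : PathB × G` (with `a` starting at `idem x`), and `deltaRow` lists the matrix
entries of its structure map `δ`.  The Maurer–Cartan sum `∑_{k≥1} μ_k(δ,…,δ)`,
evaluated entrywise from a generator `gg` to a generator `gg'`, is
`∑_k MCterm k gg gg'` (a sum over chains of entries of `δ`); it is eventually
constant, and the Maurer–Cartan equation says that it vanishes: for every `N ≥ 4`,
`∑_{k=1}^N MCterm k gg gg' = 0`.
-/

namespace Stmt15

/-! ### The A∞-category `𝒜` of the 4-punctured sphere (as in statements 13/14) -/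

inductive B : Type
  | endo : ZMod 4 → ℤ → B
  | uu : ZMod 4 → ℕ → B
  | vv : ZMod 4 → ℕ → B
deriving DecidableEq

def mu2 : B → B → Option B
  | .endo i a, .endo j b => if j = i ∧ 0 ≤ a * b then some (.endo i (a + b)) else none
  | .endo i a, .uu j k => if j = i ∧ a ≤ 0 then some (.uu i (k + a.natAbs)) else none
  | .endo i a, .vv j k => if j = i ∧ 0 ≤ a then some (.vv i (k + a.natAbs)) else none
  | .uu i k, .endo j b => if j = i + 1 ∧ 0 ≤ b then some (.uu i (k + b.natAbs)) else none
  | .uu i k, .vv j l => if j = i + 1 then some (.endo i (-(k + l + 1 : ℤ))) else none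
  | .uu _ _, .uu _ _ => none
  | .vv i k, .endo j b => if j = i - 1 ∧ b ≤ 0 then some (.vv i (k + b.natAbs)) else none
  | .vv i k, .uu j l => if j = i - 1 then some (.endo i ((k : ℤ) + l + 1)) else none
  | .vv _ _, .vv _ _ => none

abbrev H := B →₀ ZMod 2

noncomputable def toH : Option B → H
  | some b => Finsupp.single b 1
  | none => 0

def uLoop (i : ZMod 4) (k : ℕ) : List B :=
  List.ofFn fun t : Fin k => B.uu (i + ((t : ℕ) : ZMod 4)) 0

def vLoop (i : ZMod 4) (k : ℕ) : List B :=
  List.ofFn fun t : Fin k => B.vv (i - ((t : ℕ) : ZMod 4)) 0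

/-- `mu` is the family of A∞-operations of the category `𝒜` -/
structure IsMu (mu : List B → Option B) : Prop where
  binary : ∀ a b : B, mu [a, b] = mu2 a b
  expand_u : ∀ (pre post : List B) (a b ca cb : B) (i : ZMod 4),
      mu2 a (.uu i 0) = some ca → mu2 (.uu (i - 1) 0) b = some cb →
      mu (pre ++ [ca] ++ uLoop (i + 1) 2 ++ [cb] ++ post)
        = mu (pre ++ [a, b] ++ post)
  expand_v : ∀ (pre post : List B) (a b ca cb : B) (i : ZMod 4),
      mu2 a (.vv i 0) = some ca → mu2 (.vv (i + 1) 0) b = some cb →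
      mu (pre ++ [ca] ++ vLoop (i - 1) 2 ++ [cb] ++ post)
        = mu (pre ++ [a, b] ++ post)
  vanish : ∀ l : List B, l.length ≠ 2 → mu l ≠ none →
      ∃ (pre post : List B) (a b ca cb : B) (i : ZMod 4),
        ((mu2 a (.uu i 0) = some ca ∧ mu2 (.uu (i - 1) 0) b = some cb ∧
            l = pre ++ [ca] ++ uLoop (i + 1) 2 ++ [cb] ++ post) ∨
         (mu2 a (.vv i 0) = some ca ∧ mu2 (.vv (i + 1) 0) b = some cb ∧
            l = pre ++ [ca] ++ vLoop (i - 1) 2 ++ [cb] ++ post)) ∧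
        mu l = mu (pre ++ [a, b] ++ post)

/-! ### The peculiar algebra `𝒜∂`, its opposite, and the division actions -/

/-- basis paths of `𝒜∂`: `(s, d)` starts at vertex `s` and has signed length `d`
(`d ≥ 0`: the `q`-path from `s` to `s + d`; `d ≤ 0`: the `p`-path from `s` to
`s + d`) -/
abbrev PathB := ZMod 4 × ℤ

/-- the end vertex of a path -/
def endV (a : PathB) : ZMod 4 := a.1 + (a.2 : ZMod 4)

/-- concatenation of basis paths (the product of `𝒜∂`); `none` = 0.  The relations
`p_i q_i = 0 = q_i p_i` mean that only likewise-oriented paths compose. -/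
def mulP (a b : PathB) : Option PathB :=
  if b.1 = endV a ∧ 0 ≤ a.2 * b.2 then some (a.1, a.2 + b.2) else none

/-- elements of `𝒜∂` (formal 𝔽₂-combinations of basis paths) -/
abbrev AP := PathB →₀ ZMod 2

noncomputable def toAP : Option PathB → AP
  | some a => Finsupp.single a 1
  | none => 0

/-- the product of `𝒜∂` -/
noncomputable def mulAP (f g : AP) : AP :=
  f.sum fun a c => g.sum fun b c' => (c * c') • toAP (mulP a b)

/-- the action `(a)⁻¹ · dc` of a path `dc ∈ 𝒜∂` on `(a)⁻¹ ∈ 𝒜∂ᵒᵖ`: remove `dc`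
from the front of `a`, i.e. `(a)⁻¹ · dc = (c)⁻¹` if `a = dc ⬝ c` (else 0) -/
def frontAct (a dc : PathB) : Option PathB :=
  if dc.1 = a.1 ∧ (0 ≤ dc.2 ∧ dc.2 ≤ a.2 ∨ a.2 ≤ dc.2 ∧ dc.2 ≤ 0)
  then some (a.1 + (dc.2 : ZMod 4), a.2 - dc.2) else none

/-- the action `p · (a)⁻¹`: remove a single `p` from the back of `a` -/
def backP (a : PathB) : Option PathB :=
  if a.2 ≤ -1 then some (a.1, a.2 + 1) else none

/-- the action `q · (a)⁻¹`: remove a single `q` from the back of `a` -/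
def backQ (a : PathB) : Option PathB :=
  if 1 ≤ a.2 then some (a.1, a.2 - 1) else none

/-! ### The twisted complex `𝓛(M)` -/

/-- generators of `𝒜∂ᵒᵖ ⊗_ℐ M`: pairs (basis path `a`, generator `x` of `M`);
such a pair lies in the summand of `𝓛(M)` indexed by `L_{endV a}` -/
abbrev Idx (G : Type) := PathB × G

noncomputable def toRow {G : Type} (o : Option (Idx G)) (mor : B) :
    (Idx G × B) →₀ ZMod 2 :=
  match o with
  | some gg => Finsupp.single (gg, mor) 1
  | none => 0

/-- the entries of the structure map `δ` of `𝓛(M)` leaving the generator `gg`: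
`δ(b ⊗ m ⊗ L_j) = b·∂_M(m) ⊗ id_{L_j} + p·b ⊗ m ⊗ u_{j,j+1} + q·b ⊗ m ⊗ v_{j,j−1}` -/
noncomputable def deltaRow {G : Type} [Fintype G] (d : G → G → AP) (gg : Idx G) :
    (Idx G × B) →₀ ZMod 2 :=
  (∑ y : G, (d gg.2 y).sum fun dc c =>
      c • toRow ((frontAct gg.1 dc).map fun a' => (a', y)) (B.endo (endV gg.1) 0))
  + toRow ((backP gg.1).map fun a' => (a', gg.2)) (B.uu (endV gg.1) 0)
  + toRow ((backQ gg.1).map fun a' => (a', gg.2)) (B.vv (endV gg.1) 0)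

/-- length-`k` chains of entries of `δ` starting at `gg`, recording the endpoint and
the list of morphism labels along the way -/
noncomputable def chains {G : Type} [DecidableEq G]
    (row : Idx G → ((Idx G × B) →₀ ZMod 2)) :
    ℕ → Idx G → ((Idx G × List B) →₀ ZMod 2)
  | 0, gg => Finsupp.single (gg, []) 1
  | k + 1, gg =>
      (chains row k gg).sum fun pth c =>
        c • ((row pth.1).sum fun qq c' => Finsupp.single (qq.1, pth.2 ++ [qq.2]) c')

/-- the `(gg, gg')`-entry of `μ_k(δ, …, δ)` -/
noncomputable def MCterm {G : Type} [DecidableEq G] (mu : List B → Option B)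
    (row : Idx G → ((Idx G × B) →₀ ZMod 2)) (k : ℕ) (gg gg' : Idx G) : H :=
  (chains row k gg).sum fun pth c => if pth.1 = gg' then c • toH (mu pth.2) else 0

end Stmt15



section Machinery
variable {α β γ : Type*} {M : Type*} [AddCommMonoid M] [Module (ZMod 2) M]

/-- linear evaluation of a ZMod 2 Finsupp against a function -/
noncomputable def lsum (f : α →₀ ZMod 2) (φ : α → M) : M :=
  f.sum fun a c => c • φ a

lemma zmod2_cases (c : ZMod 2) : c = 0 ∨ c = 1 := by revert c; decide

@[simp] lemma lsum_zero (φ : α → M) : lsum (0 : α →₀ ZMod 2) φ = 0 := Finsupp.sum_zero_index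

@[simp] lemma lsum_single (a : α) (c : ZMod 2) (φ : α → M) :
    lsum (Finsupp.single a c) φ = c • φ a :=
  Finsupp.sum_single_index (by simp)

lemma lsum_add (f g : α →₀ ZMod 2) (φ : α → M) :
    lsum (f + g) φ = lsum f φ + lsum g φ :=
  Finsupp.sum_add_index' (by simp) (by intros; rw [add_smul])

lemma lsum_smul (c : ZMod 2) (f : α →₀ ZMod 2) (φ : α → M) :
    lsum (c • f) φ = c • lsum f φ := by
  rcases zmod2_cases c with rfl | rfl
  · simp
  · simp

lemma lsum_congr {f : α →₀ ZMod 2} {φ ψ : α → M}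
    (h : ∀ a ∈ f.support, φ a = ψ a) : lsum f φ = lsum f ψ :=
  Finsupp.sum_congr fun a ha => by rw [h a ha]

lemma lsum_eq_zero {f : α →₀ ZMod 2} {φ : α → M}
    (h : ∀ a ∈ f.support, φ a = 0) : lsum f φ = 0 := by
  rw [lsum_congr (ψ := fun _ => 0) h]; simp [lsum]

lemma lsum_lsum (f : α →₀ ZMod 2) (g : α → (β →₀ ZMod 2)) (φ : β → M) :
    lsum (lsum f g) φ = lsum f (fun a => lsum (g a) φ) := by
  induction f using Finsupp.induction with
  | zero => simp
  | single_add a c f _ _ ih =>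
      simp only [lsum_add, lsum_single, lsum_smul, ih]

lemma lsum_finsetSum {s : Finset γ} (f : γ → (α →₀ ZMod 2)) (φ : α → M) :
    lsum (∑ i ∈ s, f i) φ = ∑ i ∈ s, lsum (f i) φ := by
  classical
  induction s using Finset.induction with
  | empty => simp
  | insert a s h ih => rw [Finset.sum_insert h, Finset.sum_insert h, lsum_add, ih]

end Machinery
section Machinery2
variable {α β γ : Type*} [DecidableEq γ]

lemma lsum_support (f : α →₀ ZMod 2) (φ : α → (γ →₀ ZMod 2)) :
    (lsum f φ).support ⊆ f.support.biUnion fun a => (φ a).support := by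
  classical
  refine Finsupp.support_sum.trans ?_
  exact Finset.biUnion_mono fun a _ => Finsupp.support_smul

lemma lsum_single_comp (f : α →₀ ZMod 2) (s : α → β) (φ : β → (γ →₀ ZMod 2)) :
    lsum (lsum f fun a => Finsupp.single (s a) (1 : ZMod 2)) φ = lsum f fun a => φ (s a) := by
  rw [lsum_lsum]; exact lsum_congr fun a _ => by rw [lsum_single, one_smul]

end Machinery2

section MuFacts
open Stmt15

def IsLab (b : B) : Prop := ∃ i : ZMod 4, b = .endo i 0 ∨ b = .uu i 0 ∨ b = .vv i 0

lemma isLab_endo (i : ZMod 4) : IsLab (.endo i 0) := ⟨i, Or.inl rfl⟩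
lemma isLab_uu (i : ZMod 4) : IsLab (.uu i 0) := ⟨i, Or.inr (Or.inl rfl)⟩
lemma isLab_vv (i : ZMod 4) : IsLab (.vv i 0) := ⟨i, Or.inr (Or.inr rfl)⟩

lemma uLoop_zero (i : ZMod 4) : uLoop i 0 = [] := rfl
lemma vLoop_zero (i : ZMod 4) : vLoop i 0 = [] := rfl

lemma uLoop_succ (i : ZMod 4) (k : ℕ) : uLoop i (k+1) = .uu i 0 :: uLoop (i+1) k := by
  rw [uLoop, List.ofFn_succ, uLoop]
  congr 1
  · simp
  · congr 1; funext t; simp [Fin.val_succ]; ring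

lemma vLoop_succ (i : ZMod 4) (k : ℕ) : vLoop i (k+1) = .vv i 0 :: vLoop (i-1) k := by
  rw [vLoop, List.ofFn_succ, vLoop]
  congr 1
  · simp
  · congr 1; funext t; simp [Fin.val_succ]; ring

lemma uLoop_two (i : ZMod 4) : uLoop i 2 = [.uu i 0, .uu (i+1) 0] := by
  rw [uLoop_succ, uLoop_succ, uLoop_zero]

lemma vLoop_two (i : ZMod 4) : vLoop i 2 = [.vv i 0, .vv (i-1) 0] := by
  rw [vLoop_succ, vLoop_succ, vLoop_zero]

lemma uLoop_four (i : ZMod 4) :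
    uLoop i 4 = [.uu i 0, .uu (i+1) 0, .uu (i+2) 0, .uu (i+3) 0] := by
  rw [uLoop_succ, uLoop_succ, uLoop_succ, uLoop_succ, uLoop_zero]
  ring_nf

lemma vLoop_four (i : ZMod 4) :
    vLoop i 4 = [.vv i 0, .vv (i-1) 0, .vv (i-2) 0, .vv (i-3) 0] := by
  rw [vLoop_succ, vLoop_succ, vLoop_succ, vLoop_succ, vLoop_zero]
  ring_nf

lemma mem_uLoop {b : B} {i : ZMod 4} {k : ℕ} (h : b ∈ uLoop i k) : ∃ j, b = .uu j 0 := by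
  rw [uLoop, List.mem_ofFn] at h
  obtain ⟨t, ht⟩ := h
  exact ⟨_, ht.symm⟩

lemma mem_vLoop {b : B} {i : ZMod 4} {k : ℕ} (h : b ∈ vLoop i k) : ∃ j, b = .vv j 0 := by
  rw [vLoop, List.mem_ofFn] at h
  obtain ⟨t, ht⟩ := h
  exact ⟨_, ht.symm⟩

lemma mu2_ee (i i' : ZMod 4) :
    mu2 (.endo i 0) (.endo i' 0) = if i' = i then some (.endo i 0) else none := by
  by_cases h : i' = i <;> simp [mu2, h]

lemma mu2_eu (i i' : ZMod 4) :
    mu2 (.endo i 0) (.uu i' 0) = if i' = i then some (.uu i 0) else none := by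
  by_cases h : i' = i <;> simp [mu2, h]

lemma mu2_ev (i i' : ZMod 4) :
    mu2 (.endo i 0) (.vv i' 0) = if i' = i then some (.vv i 0) else none := by
  by_cases h : i' = i <;> simp [mu2, h]

lemma mu2_ue (i i' : ZMod 4) :
    mu2 (.uu i 0) (.endo i' 0) = if i' = i + 1 then some (.uu i 0) else none := by
  by_cases h : i' = i + 1 <;> simp [mu2, h]

lemma mu2_uv (i i' : ZMod 4) :
    mu2 (.uu i 0) (.vv i' 0) = if i' = i + 1 then some (.endo i (-1)) else none := by
  by_cases h : i' = i + 1 <;> simp [mu2, h]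

lemma mu2_uu (i i' : ZMod 4) (k k' : ℕ) : mu2 (.uu i k) (.uu i' k') = none := rfl

lemma mu2_ve (i i' : ZMod 4) :
    mu2 (.vv i 0) (.endo i' 0) = if i' = i - 1 then some (.vv i 0) else none := by
  by_cases h : i' = i - 1 <;> simp [mu2, h]

lemma mu2_vu (i i' : ZMod 4) :
    mu2 (.vv i 0) (.uu i' 0) = if i' = i - 1 then some (.endo i 1) else none := by
  by_cases h : i' = i - 1 <;> simp [mu2, h]

lemma mu2_vv (i i' : ZMod 4) (k k' : ℕ) : mu2 (.vv i k) (.vv i' k') = none := rfl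

lemma mu2_label_u_left {a ca : B} {i : ZMod 4} (h : mu2 a (.uu i 0) = some ca)
    (hl : IsLab ca) : a = .endo i 0 ∧ ca = .uu i 0 := by
  obtain ⟨j, hj⟩ := hl
  cases a with
  | endo i' t =>
      rw [mu2] at h
      split at h
      · rename_i hc
        obtain ⟨rfl, ht⟩ := hc
        injection h with h
        subst h
        rcases hj with hj | hj | hj <;> simp_all <;> omega
      · exact absurd h (by simp)
  | uu i' k => exact absurd h (by simp [mu2])
  | vv i' k =>
      rw [mu2] at h
      split at h
      · injection h with h
        subst h
        rcases hj with hj | hj | hj <;> simp_all <;> omega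
      · exact absurd h (by simp)

lemma mu2_label_v_left {a ca : B} {i : ZMod 4} (h : mu2 a (.vv i 0) = some ca)
    (hl : IsLab ca) : a = .endo i 0 ∧ ca = .vv i 0 := by
  obtain ⟨j, hj⟩ := hl
  cases a with
  | endo i' t =>
      rw [mu2] at h
      split at h
      · rename_i hc
        obtain ⟨rfl, ht⟩ := hc
        injection h with h
        subst h
        rcases hj with hj | hj | hj <;> simp_all <;> omega
      · exact absurd h (by simp)
  | uu i' k =>
      rw [mu2] at h
      split at h
      · injection h with h
        subst h
        rcases hj with hj | hj | hj <;> simp_all <;> omega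
      · exact absurd h (by simp)
  | vv i' k => exact absurd h (by simp [mu2])

lemma mu2_label_u_right {b cb : B} {i : ZMod 4} (h : mu2 (.uu i 0) b = some cb)
    (hl : IsLab cb) : b = .endo (i+1) 0 ∧ cb = .uu i 0 := by
  obtain ⟨j, hj⟩ := hl
  cases b with
  | endo i' t =>
      rw [mu2] at h
      split at h
      · rename_i hc
        obtain ⟨rfl, ht⟩ := hc
        injection h with h
        subst h
        rcases hj with hj | hj | hj <;> simp_all <;> omega
      · exact absurd h (by simp)
  | uu i' k => exact absurd h (by simp [mu2])
  | vv i' k =>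
      rw [mu2] at h
      split at h
      · injection h with h
        subst h
        rcases hj with hj | hj | hj <;> simp_all <;> omega
      · exact absurd h (by simp)

lemma mu2_label_v_right {b cb : B} {i : ZMod 4} (h : mu2 (.vv i 0) b = some cb)
    (hl : IsLab cb) : b = .endo (i-1) 0 ∧ cb = .vv i 0 := by
  obtain ⟨j, hj⟩ := hl
  cases b with
  | endo i' t =>
      rw [mu2] at h
      split at h
      · rename_i hc
        obtain ⟨rfl, ht⟩ := hc
        injection h with h
        subst h
        rcases hj with hj | hj | hj <;> simp_all <;> omega
      · exact absurd h (by simp)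
  | uu i' k =>
      rw [mu2] at h
      split at h
      · injection h with h
        subst h
        rcases hj with hj | hj | hj <;> simp_all <;> omega
      · exact absurd h (by simp)
  | vv i' k => exact absurd h (by simp [mu2])

end MuFacts

set_option linter.unreachableTactic false
set_option linter.unusedTactic false
set_option linter.unnecessarySeqFocus false

section MuNone
open Stmt15

variable {mu : List B → Option B}

lemma zmod4_sub_add (i : ZMod 4) : i - 1 + 1 = i := by ring
lemma zmod4_m1 (i : ZMod 4) : i - 1 = i + 3 := by
  have : (3 : ZMod 4) = -1 := by decide
  rw [this]; ring
lemma zmod4_p1 (i : ZMod 4) : i + 1 = i - 3 := by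
  have : (3 : ZMod 4) = -1 := by decide
  rw [this]; ring

lemma uLoop_four' (i : ZMod 4) :
    [B.uu i 0] ++ uLoop (i+1) 2 ++ [B.uu (i-1) 0] = uLoop i 4 := by
  rw [uLoop_two, uLoop_four]
  have h1 : i + 1 + 1 = i + 2 := by ring
  have h2 : i - 1 = i + 3 := zmod4_m1 i
  rw [h1, h2]
  simp

lemma vLoop_four' (i : ZMod 4) :
    [B.vv i 0] ++ vLoop (i-1) 2 ++ [B.vv (i+1) 0] = vLoop i 4 := by
  rw [vLoop_two, vLoop_four]
  have h1 : i - 1 - 1 = i - 2 := by ring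
  have h2 : i + 1 = i - 3 := zmod4_p1 i
  rw [h1, h2]
  simp

lemma mu_uLoop (hmu : IsMu mu) (i : ZMod 4) : mu (uLoop i 4) = some (.endo i 0) := by
  have h1 : mu2 (B.endo i 0) (B.uu i 0) = some (B.uu i 0) := by simp [mu2]
  have h2 : mu2 (B.uu (i-1) 0) (B.endo i 0) = some (B.uu (i-1) 0) := by
    simp [mu2, zmod4_sub_add]
  have he := hmu.expand_u [] [] (B.endo i 0) (B.endo i 0) (B.uu i 0) (B.uu (i-1) 0) i h1 h2
  have hb := hmu.binary (B.endo i 0) (B.endo i 0)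
  have hlist : ([] : List B) ++ [B.uu i 0] ++ uLoop (i+1) 2 ++ [B.uu (i-1) 0] ++ []
      = uLoop i 4 := by simpa using uLoop_four' i
  rw [hlist] at he
  rw [he]
  simp only [List.nil_append, List.append_nil]
  rw [hb, mu2_ee]
  simp

lemma mu_vLoop (hmu : IsMu mu) (i : ZMod 4) : mu (vLoop i 4) = some (.endo i 0) := by
  have h1 : mu2 (B.endo i 0) (B.vv i 0) = some (B.vv i 0) := by simp [mu2]
  have h2 : mu2 (B.vv (i+1) 0) (B.endo i 0) = some (B.vv (i+1) 0) := by
    simp [mu2]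
  have he := hmu.expand_v [] [] (B.endo i 0) (B.endo i 0) (B.vv i 0) (B.vv (i+1) 0) i h1 h2
  have hb := hmu.binary (B.endo i 0) (B.endo i 0)
  have hlist : ([] : List B) ++ [B.vv i 0] ++ vLoop (i-1) 2 ++ [B.vv (i+1) 0] ++ []
      = vLoop i 4 := by simpa using vLoop_four' i
  rw [hlist] at he
  rw [he]
  simp only [List.nil_append, List.append_nil]
  rw [hb, mu2_ee]
  simp

lemma mu_none (hmu : IsMu mu) :
    ∀ (n : ℕ) (l : List B), l.length ≤ n → (∀ b ∈ l, IsLab b) → l.length ≠ 2 →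
      (∀ i, l ≠ uLoop i 4) → (∀ i, l ≠ vLoop i 4) → mu l = none := by
  intro n
  induction n with
  | zero =>
      intro l hn _ h2 _ _
      by_contra h
      obtain ⟨pre, post, a, b, ca, cb, i, hcase, -⟩ := hmu.vanish l h2 h
      rcases hcase with ⟨-, -, hl⟩ | ⟨-, -, hl⟩ <;>
        · rw [hl] at hn
          simp [uLoop_two, vLoop_two] at hn
  | succ n ih =>
      intro l hn hlab h2 hu hv
      by_contra h
      obtain ⟨pre, post, a, b, ca, cb, i, hcase, heq⟩ := hmu.vanish l h2 h
      rcases hcase with ⟨hca, hcb, hl⟩ | ⟨hca, hcb, hl⟩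
      · -- u case
        have hcaL : IsLab ca := hlab ca (by rw [hl]; simp)
        have hcbL : IsLab cb := hlab cb (by rw [hl]; simp)
        obtain ⟨rfl, rfl⟩ := mu2_label_u_left hca hcaL
        obtain ⟨hb, rfl⟩ := mu2_label_u_right hcb hcbL
        rw [zmod4_sub_add] at hb
        subst hb
        have hlen : l.length = pre.length + 4 + post.length := by
          rw [hl]; simp [uLoop_two]; omega
        by_cases hpp : pre = [] ∧ post = []
        · obtain ⟨rfl, rfl⟩ := hpp
          refine hu i ?_
          rw [hl]
          simpa using uLoop_four' i
        · have hone : 1 ≤ pre.length + post.length := by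
            rcases Classical.em (pre = []) with rfl | hp
            · have : post ≠ [] := fun hq => hpp ⟨rfl, hq⟩
              have := List.length_pos_iff.mpr this
              omega
            · have := List.length_pos_iff.mpr hp
              omega
          have hmain : mu (pre ++ [B.endo i 0, B.endo i 0] ++ post) = none := by
            refine ih _ (by simp; omega) ?_ (by simp; omega) ?_ ?_
            · intro b hb
              simp at hb
              rcases hb with hb | hb | hb
              · exact hlab b (by rw [hl]; simp [hb])
              · rw [hb]; exact isLab_endo i
              · exact hlab b (by rw [hl]; simp [hb])
            · intro i' hE
              have : B.endo i 0 ∈ uLoop i' 4 := by rw [← hE]; simp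
              obtain ⟨j, hj⟩ := mem_uLoop this
              cases hj
            · intro i' hE
              have : B.endo i 0 ∈ vLoop i' 4 := by rw [← hE]; simp
              obtain ⟨j, hj⟩ := mem_vLoop this
              cases hj
          exact h (heq.trans hmain)
      · -- v case
        have hcaL : IsLab ca := hlab ca (by rw [hl]; simp)
        have hcbL : IsLab cb := hlab cb (by rw [hl]; simp)
        obtain ⟨rfl, rfl⟩ := mu2_label_v_left hca hcaL
        obtain ⟨hb, rfl⟩ := mu2_label_v_right hcb hcbL
        have hadd : i + 1 - 1 = i := by ring
        rw [hadd] at hb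
        subst hb
        have hlen : l.length = pre.length + 4 + post.length := by
          rw [hl]; simp [vLoop_two]; omega
        by_cases hpp : pre = [] ∧ post = []
        · obtain ⟨rfl, rfl⟩ := hpp
          refine hv i ?_
          rw [hl]
          simpa using vLoop_four' i
        · have hone : 1 ≤ pre.length + post.length := by
            rcases Classical.em (pre = []) with rfl | hp
            · have : post ≠ [] := fun hq => hpp ⟨rfl, hq⟩
              have := List.length_pos_iff.mpr this
              omega
            · have := List.length_pos_iff.mpr hp
              omega
          have hmain : mu (pre ++ [B.endo i 0, B.endo i 0] ++ post) = none := by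
            refine ih _ (by simp; omega) ?_ (by simp; omega) ?_ ?_
            · intro b hb
              simp at hb
              rcases hb with hb | hb | hb
              · exact hlab b (by rw [hl]; simp [hb])
              · rw [hb]; exact isLab_endo i
              · exact hlab b (by rw [hl]; simp [hb])
            · intro i' hE
              have : B.endo i 0 ∈ uLoop i' 4 := by rw [← hE]; simp
              obtain ⟨j, hj⟩ := mem_uLoop this
              cases hj
            · intro i' hE
              have : B.endo i 0 ∈ vLoop i' 4 := by rw [← hE]; simp
              obtain ⟨j, hj⟩ := mem_vLoop this
              cases hj
          exact h (heq.trans hmain)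

lemma mu_labels_eq_none (hmu : IsMu mu) {l : List B} (hlab : ∀ b ∈ l, IsLab b)
    (h2 : l.length ≠ 2) (hu : ∀ i, l ≠ uLoop i 4) (hv : ∀ i, l ≠ vLoop i 4) :
    mu l = none :=
  mu_none hmu l.length l le_rfl hlab h2 hu hv

end MuNone

section ChainsFacts
open Stmt15
variable {G : Type} [Fintype G] [DecidableEq G]

@[simp] lemma toH_some (b : B) : toH (some b) = Finsupp.single b 1 := rfl
@[simp] lemma toH_none : toH none = 0 := rfl
@[simp] lemma toAP_some (a : PathB) : toAP (some a) = Finsupp.single a 1 := rfl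
@[simp] lemma toAP_none : toAP none = 0 := rfl

lemma chains_zero (row : Idx G → ((Idx G × B) →₀ ZMod 2)) (gg : Idx G) :
    chains row 0 gg = Finsupp.single (gg, []) 1 := rfl

lemma chains_succ (row : Idx G → ((Idx G × B) →₀ ZMod 2)) (k : ℕ) (gg : Idx G) :
    chains row (k+1) gg = lsum (chains row k gg)
      (fun pth => lsum (row pth.1) fun qq => Finsupp.single (qq.1, pth.2 ++ [qq.2]) 1) := by
  show (chains row k gg).sum _ = _
  refine Finsupp.sum_congr fun pth _ => ?_
  congr 1
  refine Finsupp.sum_congr fun qq _ => ?_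
  rw [Finsupp.smul_single', mul_one]

lemma MCterm_eq (mu : List B → Option B) (row : Idx G → ((Idx G × B) →₀ ZMod 2))
    (k : ℕ) (gg gg' : Idx G) :
    MCterm mu row k gg gg' = lsum (chains row k gg)
      (fun pth => if pth.1 = gg' then toH (mu pth.2) else 0) := by
  show (chains row k gg).sum _ = _
  refine Finsupp.sum_congr fun pth _ => ?_
  by_cases h : pth.1 = gg' <;> simp [h]

lemma chains_support {row : Idx G → ((Idx G × B) →₀ ZMod 2)}
    (hrow : ∀ p qq, qq ∈ (row p).support → IsLab qq.2) :
    ∀ (k : ℕ) (gg : Idx G), ∀ pth ∈ (chains row k gg).support,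
      pth.2.length = k ∧ ∀ b ∈ pth.2, IsLab b := by
  intro k
  induction k with
  | zero =>
      intro gg pth h
      rw [chains_zero] at h
      have := Finsupp.support_single_subset h
      simp at this
      subst this
      simp
  | succ k ih =>
      intro gg pth h
      rw [chains_succ] at h
      have h1 := lsum_support _ _ h
      simp only [Finset.mem_biUnion] at h1
      obtain ⟨pth', hp', h2⟩ := h1
      have h3 := lsum_support _ _ h2
      simp only [Finset.mem_biUnion] at h3
      obtain ⟨qq, hq, h4⟩ := h3
      have h5 := Finsupp.support_single_subset h4
      simp at h5
      subst h5
      obtain ⟨hlen, hlab⟩ := ih gg pth' hp'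
      refine ⟨by simp [hlen], ?_⟩
      intro b hb
      simp at hb
      rcases hb with hb | hb
      · exact hlab b hb
      · rw [hb]; exact hrow _ _ hq

lemma uLoop_length (i : ZMod 4) (k : ℕ) : (uLoop i k).length = k := by simp [uLoop]
lemma vLoop_length (i : ZMod 4) (k : ℕ) : (vLoop i k).length = k := by simp [vLoop]

lemma MCterm_vanish {mu : List B → Option B} (hmu : IsMu mu)
    {row : Idx G → ((Idx G × B) →₀ ZMod 2)}
    (hrow : ∀ p qq, qq ∈ (row p).support → IsLab qq.2)
    (k : ℕ) (hk2 : k ≠ 2) (hk4 : k ≠ 4) (gg gg' : Idx G) :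
    MCterm mu row k gg gg' = 0 := by
  rw [MCterm_eq]
  refine lsum_eq_zero fun pth hp => ?_
  obtain ⟨hlen, hlab⟩ := chains_support hrow k gg pth hp
  have hnone : mu pth.2 = none := by
    refine mu_labels_eq_none hmu hlab (by omega) ?_ ?_
    · intro i hE
      rw [hE, uLoop_length] at hlen
      omega
    · intro i hE
      rw [hE, vLoop_length] at hlen
      omega
  rw [hnone]
  split <;> simp

lemma chains_one (row : Idx G → ((Idx G × B) →₀ ZMod 2)) (gg : Idx G) :
    chains row 1 gg = lsum (row gg) fun q1 => Finsupp.single (q1.1, [q1.2]) 1 := by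
  rw [chains_succ, chains_zero, lsum_single, one_smul]
  simp

lemma chains_two (row : Idx G → ((Idx G × B) →₀ ZMod 2)) (gg : Idx G) :
    chains row 2 gg = lsum (row gg) fun q1 => lsum (row q1.1) fun q2 =>
      Finsupp.single (q2.1, [q1.2, q2.2]) 1 := by
  rw [chains_succ, chains_one, lsum_lsum]
  refine lsum_congr fun q1 _ => ?_
  rw [lsum_single, one_smul]
  simp

lemma chains_three (row : Idx G → ((Idx G × B) →₀ ZMod 2)) (gg : Idx G) :
    chains row 3 gg = lsum (row gg) fun q1 => lsum (row q1.1) fun q2 =>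
      lsum (row q2.1) fun q3 => Finsupp.single (q3.1, [q1.2, q2.2, q3.2]) 1 := by
  rw [chains_succ, chains_two, lsum_lsum]
  refine lsum_congr fun q1 _ => ?_
  rw [lsum_lsum]
  refine lsum_congr fun q2 _ => ?_
  rw [lsum_single, one_smul]
  simp

lemma chains_four (row : Idx G → ((Idx G × B) →₀ ZMod 2)) (gg : Idx G) :
    chains row 4 gg = lsum (row gg) fun q1 => lsum (row q1.1) fun q2 =>
      lsum (row q2.1) fun q3 => lsum (row q3.1) fun q4 =>
        Finsupp.single (q4.1, [q1.2, q2.2, q3.2, q4.2]) 1 := by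
  rw [chains_succ, chains_three, lsum_lsum]
  refine lsum_congr fun q1 _ => ?_
  rw [lsum_lsum]
  refine lsum_congr fun q2 _ => ?_
  rw [lsum_lsum]
  refine lsum_congr fun q3 _ => ?_
  rw [lsum_single, one_smul]
  simp

lemma MCterm_two (mu : List B → Option B) (row : Idx G → ((Idx G × B) →₀ ZMod 2))
    (gg gg' : Idx G) :
    MCterm mu row 2 gg gg' = lsum (row gg) fun q1 => lsum (row q1.1) fun q2 =>
      if q2.1 = gg' then toH (mu [q1.2, q2.2]) else 0 := by
  rw [MCterm_eq, chains_two, lsum_lsum]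
  refine lsum_congr fun q1 _ => ?_
  rw [lsum_lsum]
  refine lsum_congr fun q2 _ => ?_
  rw [lsum_single, one_smul]

lemma MCterm_four (mu : List B → Option B) (row : Idx G → ((Idx G × B) →₀ ZMod 2))
    (gg gg' : Idx G) :
    MCterm mu row 4 gg gg' = lsum (row gg) fun q1 => lsum (row q1.1) fun q2 =>
      lsum (row q2.1) fun q3 => lsum (row q3.1) fun q4 =>
        if q4.1 = gg' then toH (mu [q1.2, q2.2, q3.2, q4.2]) else 0 := by
  rw [MCterm_eq, chains_four, lsum_lsum]
  refine lsum_congr fun q1 _ => ?_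
  rw [lsum_lsum]
  refine lsum_congr fun q2 _ => ?_
  rw [lsum_lsum]
  refine lsum_congr fun q3 _ => ?_
  rw [lsum_lsum]
  refine lsum_congr fun q4 _ => ?_
  rw [lsum_single, one_smul]

end ChainsFacts

section PathFacts
open Stmt15

lemma frontAct_eq (a dc : PathB) :
    frontAct a dc = if dc.1 = a.1 ∧ (0 ≤ dc.2 ∧ dc.2 ≤ a.2 ∨ a.2 ≤ dc.2 ∧ dc.2 ≤ 0)
      then some (a.1 + (dc.2 : ZMod 4), a.2 - dc.2) else none := rfl

lemma backP_eq (a : PathB) :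
    backP a = if a.2 ≤ -1 then some (a.1, a.2 + 1) else none := rfl

lemma backQ_eq (a : PathB) :
    backQ a = if 1 ≤ a.2 then some (a.1, a.2 - 1) else none := rfl

lemma endV_frontAct {a dc a' : PathB} (h : frontAct a dc = some a') : endV a' = endV a := by
  rw [frontAct_eq] at h
  split at h
  · injection h with h
    subst h
    unfold endV
    push_cast
    ring
  · exact absurd h (by simp)

lemma fst_frontAct {a dc a' : PathB} (h : frontAct a dc = some a') :
    a'.1 = a.1 + (dc.2 : ZMod 4) ∧ a'.2 = a.2 - dc.2 := by
  rw [frontAct_eq] at h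
  split at h
  · injection h with h
    subst h
    exact ⟨rfl, rfl⟩
  · exact absurd h (by simp)

lemma endV_backP {a a' : PathB} (h : backP a = some a') : endV a' = endV a + 1 := by
  rw [backP_eq] at h
  split at h
  · injection h with h
    subst h
    unfold endV
    push_cast
    ring
  · exact absurd h (by simp)

lemma endV_backQ {a a' : PathB} (h : backQ a = some a') : endV a' = endV a - 1 := by
  rw [backQ_eq] at h
  split at h
  · injection h with h
    subst h
    unfold endV
    push_cast
    ring
  · exact absurd h (by simp)

lemma front_front (a dc dc' : PathB) :
    (frontAct a dc).bind (fun a1 => frontAct a1 dc') = (mulP dc dc').bind fun e => frontAct a e := by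
  rcases a with ⟨i, s⟩; rcases dc with ⟨j, m⟩; rcases dc' with ⟨k, n⟩
  by_cases hj : j = i
  · subst hj
    by_cases hA : 0 ≤ m ∧ m ≤ s ∨ s ≤ m ∧ m ≤ 0
    · rw [show frontAct (j, s) (j, m) = some (j + (m : ZMod 4), s - m) from by
        rw [frontAct_eq, if_pos ⟨rfl, hA⟩]]
      simp only [Option.bind_some]
      by_cases hB : k = j + (m : ZMod 4) ∧ (0 ≤ n ∧ n ≤ s - m ∨ s - m ≤ n ∧ n ≤ 0)
      · rw [show frontAct (j + (m : ZMod 4), s - m) (k, n)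
            = some (j + (m : ZMod 4) + (n : ZMod 4), s - m - n) from by
          rw [frontAct_eq, if_pos ⟨hB.1, hB.2⟩]]
        have hmn : 0 ≤ m * n := by
          rcases hA with ⟨hm1, hm2⟩ | ⟨hm1, hm2⟩ <;> rcases hB.2 with ⟨hn1, hn2⟩ | ⟨hn1, hn2⟩
          · exact mul_nonneg hm1 hn1
          · have : n = 0 := by omega
            simp [this]
          · have : n = 0 := by omega
            simp [this]
          · exact mul_nonneg_iff.mpr (Or.inr ⟨hm2, hn2⟩)
        rw [show mulP (j, m) (k, n) = some (j, m + n) from by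
          rw [mulP]; rw [if_pos ⟨by rw [hB.1]; rfl, hmn⟩]]
        simp only [Option.bind_some]
        rw [show frontAct (j, s) (j, m + n) = some (j + ((m + n : ℤ) : ZMod 4), s - (m + n)) from by
          rw [frontAct_eq, if_pos ⟨rfl, by rcases hA with hA | hA <;> rcases hB.2 with hB2 | hB2 <;> omega⟩]]
        congr 1
        refine Prod.ext ?_ (by ring)
        show j + (m : ZMod 4) + (n : ZMod 4) = j + ((m + n : ℤ) : ZMod 4)
        push_cast
        ring
      · rw [show frontAct (j + (m : ZMod 4), s - m) (k, n) = none from by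
          rw [frontAct_eq, if_neg hB]]
        by_cases hD : k = endV (j, m) ∧ 0 ≤ m * n
        · rw [show mulP (j, m) (k, n) = some (j, m + n) from by rw [mulP, if_pos hD]]
          simp only [Option.bind_some]
          rw [show frontAct (j, s) (j, m + n) = none from by
            rw [frontAct_eq, if_neg ?_]
            rintro ⟨-, hI⟩
            have hk : k = j + (m : ZMod 4) := hD.1
            have hs : 0 ≤ m ∧ 0 ≤ n ∨ m ≤ 0 ∧ n ≤ 0 := mul_nonneg_iff.mp hD.2
            exact hB ⟨hk, by rcases hA with hA | hA <;> rcases hs with hs | hs <;> omega⟩]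
        · rw [show mulP (j, m) (k, n) = none from by rw [mulP, if_neg hD]]
          rfl
    · rw [show frontAct (j, s) (j, m) = none from by rw [frontAct_eq, if_neg (by
        rintro ⟨-, h⟩; exact hA h)]]
      simp only [Option.bind_none]
      by_cases hD : k = endV (j, m) ∧ 0 ≤ m * n
      · rw [show mulP (j, m) (k, n) = some (j, m + n) from by rw [mulP, if_pos hD]]
        simp only [Option.bind_some]
        rw [show frontAct (j, s) (j, m + n) = none from by
          rw [frontAct_eq, if_neg ?_]
          rintro ⟨-, hI⟩
          have hs : 0 ≤ m ∧ 0 ≤ n ∨ m ≤ 0 ∧ n ≤ 0 := mul_nonneg_iff.mp hD.2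
          exact hA (by rcases hs with hs | hs <;> omega)]
      · rw [show mulP (j, m) (k, n) = none from by rw [mulP, if_neg hD]]
        rfl
  · rw [show frontAct (i, s) (j, m) = none from by
      rw [frontAct_eq, if_neg (by rintro ⟨h, -⟩; exact hj h)]]
    simp only [Option.bind_none]
    by_cases hD : k = endV (j, m) ∧ 0 ≤ m * n
    · rw [show mulP (j, m) (k, n) = some (j, m + n) from by rw [mulP, if_pos hD]]
      simp only [Option.bind_some]
      rw [show frontAct (i, s) (j, m + n) = none from by
        rw [frontAct_eq, if_neg (by rintro ⟨h, -⟩; exact hj h)]]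
    · rw [show mulP (j, m) (k, n) = none from by rw [mulP, if_neg hD]]
      rfl

lemma front_backP (a dc : PathB) :
    (frontAct a dc).bind backP = (backP a).bind fun a1 => frontAct a1 dc := by
  rcases a with ⟨i, s⟩; rcases dc with ⟨j, m⟩
  by_cases hj : j = i
  · subst hj
    by_cases hA : (0 ≤ m ∧ m ≤ s ∨ s ≤ m ∧ m ≤ 0) ∧ s - m ≤ -1
    · rw [show frontAct (j, s) (j, m) = some (j + (m : ZMod 4), s - m) from by
        rw [frontAct_eq, if_pos ⟨rfl, hA.1⟩]]
      simp only [Option.bind_some]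
      rw [show backP (j + (m : ZMod 4), s - m) = some (j + (m : ZMod 4), s - m + 1) from by
        rw [backP_eq, if_pos hA.2]]
      rw [show backP (j, s) = some (j, s + 1) from by rw [backP_eq, if_pos (by omega)]]
      simp only [Option.bind_some]
      rw [show frontAct (j, s + 1) (j, m) = some (j + (m : ZMod 4), s + 1 - m) from by
        rw [frontAct_eq, if_pos ⟨rfl, by rcases hA.1 with h | h <;> omega⟩]]
      exact congrArg some (Prod.ext rfl (by ring))
    · -- LHS is none
      have hL : (frontAct (j, s) (j, m)).bind backP = none := by
        by_cases h1 : 0 ≤ m ∧ m ≤ s ∨ s ≤ m ∧ m ≤ 0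
        · rw [show frontAct (j, s) (j, m) = some (j + (m : ZMod 4), s - m) from by
            rw [frontAct_eq, if_pos ⟨rfl, h1⟩]]
          simp only [Option.bind_some]
          rw [backP_eq, if_neg (by intro h2; exact hA ⟨h1, h2⟩)]
        · rw [show frontAct (j, s) (j, m) = none from by
            rw [frontAct_eq, if_neg (by rintro ⟨-, h⟩; exact h1 h)]]
          rfl
      rw [hL]
      by_cases h3 : s ≤ -1
      · rw [show backP (j, s) = some (j, s + 1) from by rw [backP_eq, if_pos h3]]
        simp only [Option.bind_some]
        rw [show frontAct (j, s + 1) (j, m) = none from by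
          rw [frontAct_eq, if_neg ?_]
          rintro ⟨-, h⟩
          exact hA (by omega)]
      · rw [show backP (j, s) = none from by rw [backP_eq, if_neg h3]]
        rfl
  · have hL : frontAct (i, s) (j, m) = none := by
      rw [frontAct_eq, if_neg (by rintro ⟨h, -⟩; exact hj h)]
    rw [hL]
    simp only [Option.bind_none]
    by_cases h3 : s ≤ -1
    · rw [show backP (i, s) = some (i, s + 1) from by rw [backP_eq, if_pos h3]]
      simp only [Option.bind_some]
      rw [show frontAct (i, s + 1) (j, m) = none from by
        rw [frontAct_eq, if_neg (by rintro ⟨h, -⟩; exact hj h)]]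
    · rw [show backP (i, s) = none from by rw [backP_eq, if_neg h3]]
      rfl

lemma front_backQ (a dc : PathB) :
    (frontAct a dc).bind backQ = (backQ a).bind fun a1 => frontAct a1 dc := by
  rcases a with ⟨i, s⟩; rcases dc with ⟨j, m⟩
  by_cases hj : j = i
  · subst hj
    by_cases hA : (0 ≤ m ∧ m ≤ s ∨ s ≤ m ∧ m ≤ 0) ∧ 1 ≤ s - m
    · rw [show frontAct (j, s) (j, m) = some (j + (m : ZMod 4), s - m) from by
        rw [frontAct_eq, if_pos ⟨rfl, hA.1⟩]]
      simp only [Option.bind_some]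
      rw [show backQ (j + (m : ZMod 4), s - m) = some (j + (m : ZMod 4), s - m - 1) from by
        rw [backQ_eq, if_pos hA.2]]
      rw [show backQ (j, s) = some (j, s - 1) from by rw [backQ_eq, if_pos (by omega)]]
      simp only [Option.bind_some]
      rw [show frontAct (j, s - 1) (j, m) = some (j + (m : ZMod 4), s - 1 - m) from by
        rw [frontAct_eq, if_pos ⟨rfl, by rcases hA.1 with h | h <;> omega⟩]]
      exact congrArg some (Prod.ext rfl (by ring))
    · have hL : (frontAct (j, s) (j, m)).bind backQ = none := by
        by_cases h1 : 0 ≤ m ∧ m ≤ s ∨ s ≤ m ∧ m ≤ 0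
        · rw [show frontAct (j, s) (j, m) = some (j + (m : ZMod 4), s - m) from by
            rw [frontAct_eq, if_pos ⟨rfl, h1⟩]]
          simp only [Option.bind_some]
          rw [backQ_eq, if_neg (by intro h2; exact hA ⟨h1, h2⟩)]
        · rw [show frontAct (j, s) (j, m) = none from by
            rw [frontAct_eq, if_neg (by rintro ⟨-, h⟩; exact h1 h)]]
          rfl
      rw [hL]
      by_cases h3 : 1 ≤ s
      · rw [show backQ (j, s) = some (j, s - 1) from by rw [backQ_eq, if_pos h3]]
        simp only [Option.bind_some]
        rw [show frontAct (j, s - 1) (j, m) = none from by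
          rw [frontAct_eq, if_neg ?_]
          rintro ⟨-, h⟩
          exact hA (by omega)]
      · rw [show backQ (j, s) = none from by rw [backQ_eq, if_neg h3]]
        rfl
  · have hL : frontAct (i, s) (j, m) = none := by
      rw [frontAct_eq, if_neg (by rintro ⟨h, -⟩; exact hj h)]
    rw [hL]
    simp only [Option.bind_none]
    by_cases h3 : 1 ≤ s
    · rw [show backQ (i, s) = some (i, s - 1) from by rw [backQ_eq, if_pos h3]]
      simp only [Option.bind_some]
      rw [show frontAct (i, s - 1) (j, m) = none from by
        rw [frontAct_eq, if_neg (by rintro ⟨h, -⟩; exact hj h)]]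
    · rw [show backQ (i, s) = none from by rw [backQ_eq, if_neg h3]]
      rfl

lemma backQ_backP {a a' : PathB} (h : backP a = some a') : backQ a' = none := by
  rw [backP_eq] at h
  split at h
  · injection h with h
    subst h
    rw [backQ_eq, if_neg (by simp; omega)]
  · exact absurd h (by simp)

lemma backP_backQ {a a' : PathB} (h : backQ a = some a') : backP a' = none := by
  rw [backQ_eq] at h
  split at h
  · injection h with h
    subst h
    rw [backP_eq, if_neg (by simp; omega)]
  · exact absurd h (by simp)

lemma frontAct_q4 (a : PathB) :
    frontAct a (a.1, 4) = if 4 ≤ a.2 then some (a.1, a.2 - 4) else none := by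
  rw [frontAct_eq]
  by_cases h : 4 ≤ a.2
  · rw [if_pos ⟨rfl, by omega⟩, if_pos h]
    congr 1
    refine Prod.ext ?_ rfl
    show a.1 + ((4 : ℤ) : ZMod 4) = a.1
    have h4 : ((4 : ℤ) : ZMod 4) = 0 := by decide
    rw [h4, add_zero]
  · rw [if_neg (by rintro ⟨-, hh⟩; omega), if_neg h]

lemma frontAct_p4 (a : PathB) :
    frontAct a (a.1, -4) = if a.2 ≤ -4 then some (a.1, a.2 + 4) else none := by
  rw [frontAct_eq]
  by_cases h : a.2 ≤ -4
  · rw [if_pos ⟨rfl, by omega⟩, if_pos h]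
    congr 1
    refine Prod.ext ?_ (by ring)
    show a.1 + ((-4 : ℤ) : ZMod 4) = a.1
    have h4 : ((-4 : ℤ) : ZMod 4) = 0 := by decide
    rw [h4, add_zero]
  · rw [if_neg (by rintro ⟨-, hh⟩; omega), if_neg h]

end PathFacts

section Rows
open Stmt15
variable {G : Type} [Fintype G] [DecidableEq G]
variable {M : Type*} [AddCommMonoid M] [Module (ZMod 2) M]

noncomputable def rowF (d : G → G → AP) (p : Idx G) : (Idx G × B) →₀ ZMod 2 :=
  ∑ y : G, (d p.2 y).sum fun dc c =>
      c • toRow ((frontAct p.1 dc).map fun a' => (a', y)) (B.endo (endV p.1) 0)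

noncomputable def rowP (p : Idx G) : (Idx G × B) →₀ ZMod 2 :=
  toRow ((backP p.1).map fun a' => (a', p.2)) (B.uu (endV p.1) 0)

noncomputable def rowQ (p : Idx G) : (Idx G × B) →₀ ZMod 2 :=
  toRow ((backQ p.1).map fun a' => (a', p.2)) (B.vv (endV p.1) 0)

lemma deltaRow_eq (d : G → G → AP) (p : Idx G) :
    deltaRow d p = rowF d p + rowP p + rowQ p := rfl

lemma lsum_toRow (o : Option (Idx G)) (mor : B) (φ : Idx G × B → M) :
    lsum (toRow o mor) φ = o.elim 0 fun p => φ (p, mor) := by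
  cases o
  · show lsum 0 φ = 0
    simp
  · show lsum (Finsupp.single _ 1) φ = _
    rw [lsum_single, one_smul]
    rfl

lemma lsum_rowP (p : Idx G) (φ : Idx G × B → M) :
    lsum (rowP p) φ = (backP p.1).elim 0 fun a' => φ ((a', p.2), B.uu (endV p.1) 0) := by
  rw [rowP, lsum_toRow]
  cases backP p.1 <;> rfl

lemma lsum_rowQ (p : Idx G) (φ : Idx G × B → M) :
    lsum (rowQ p) φ = (backQ p.1).elim 0 fun a' => φ ((a', p.2), B.vv (endV p.1) 0) := by
  rw [rowQ, lsum_toRow]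
  cases backQ p.1 <;> rfl

lemma lsum_rowF (d : G → G → AP) (p : Idx G) (φ : Idx G × B → M) :
    lsum (rowF d p) φ = ∑ y : G, lsum (d p.2 y) fun dc =>
      (frontAct p.1 dc).elim 0 fun a' => φ ((a', y), B.endo (endV p.1) 0) := by
  rw [rowF, lsum_finsetSum]
  refine Finset.sum_congr rfl fun y _ => ?_
  rw [show ((d p.2 y).sum fun dc c =>
      c • toRow ((frontAct p.1 dc).map fun a' => (a', y)) (B.endo (endV p.1) 0))
    = lsum (d p.2 y) (fun dc => toRow ((frontAct p.1 dc).map fun a' => (a', y))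
        (B.endo (endV p.1) 0)) from rfl]
  rw [lsum_lsum]
  refine lsum_congr fun dc _ => ?_
  rw [lsum_toRow]
  cases frontAct p.1 dc <;> rfl

lemma support_toRow {o : Option (Idx G)} {mor : B} {qq : Idx G × B}
    (h : qq ∈ (toRow o mor).support) : qq.2 = mor := by
  cases o
  · simp [toRow] at h
  · have := Finsupp.support_single_subset h
    simp at this
    rw [this]

lemma support_rowF {d : G → G → AP} {p : Idx G} {qq : Idx G × B}
    (h : qq ∈ (rowF d p).support) : qq.2 = B.endo (endV p.1) 0 := by
  rw [rowF] at h
  have h1 := Finsupp.support_finset_sum h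
  simp only [Finset.mem_biUnion] at h1
  obtain ⟨y, -, h2⟩ := h1
  have h3 := Finsupp.support_sum h2
  simp only [Finset.mem_biUnion] at h3
  obtain ⟨dc, -, h4⟩ := h3
  exact support_toRow (Finsupp.support_smul h4)

lemma support_rowP {p : Idx G} {qq : Idx G × B} (h : qq ∈ (rowP p).support) :
    qq.2 = B.uu (endV p.1) 0 := support_toRow h

lemma support_rowQ {p : Idx G} {qq : Idx G × B} (h : qq ∈ (rowQ p).support) :
    qq.2 = B.vv (endV p.1) 0 := support_toRow h

lemma deltaRow_label (d : G → G → AP) (p : Idx G) :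
    ∀ qq ∈ (deltaRow d p).support, IsLab qq.2 := by
  intro qq h
  rw [deltaRow_eq] at h
  rcases Finset.mem_union.mp (Finsupp.support_add h) with h | h
  · rcases Finset.mem_union.mp (Finsupp.support_add h) with h | h
    · rw [support_rowF h]; exact isLab_endo _
    · rw [support_rowP h]; exact isLab_uu _
  · rw [support_rowQ h]; exact isLab_vv _

lemma mulAP_eq (f g : AP) :
    mulAP f g = lsum f fun dc => lsum g fun dc' => toAP (mulP dc dc') := by
  unfold mulAP lsum
  refine Finsupp.sum_congr fun dc _ => ?_
  rw [Finsupp.smul_sum]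
  refine Finsupp.sum_congr fun dc' _ => ?_
  rw [mul_smul]

/-- the nested evaluation of the Maurer–Cartan entries -/
noncomputable def tail (mu : List B → Option B) (d : G → G → AP) (gg' : Idx G) :
    ℕ → Idx G → List B → H
  | 0, p, L => if p = gg' then toH (mu L) else 0
  | r+1, p, L => lsum (deltaRow d p) fun q => tail mu d gg' r q.1 (L ++ [q.2])

lemma tail_zero_eq (mu : List B → Option B) (d : G → G → AP) (gg' p : Idx G) (L : List B) :
    tail mu d gg' 0 p L = if p = gg' then toH (mu L) else 0 := rfl

lemma tail_succ_eq (mu : List B → Option B) (d : G → G → AP) (gg' p : Idx G) (L : List B)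
    (r : ℕ) : tail mu d gg' (r+1) p L
      = lsum (deltaRow d p) fun q => tail mu d gg' r q.1 (L ++ [q.2]) := rfl

lemma MCterm_two_tail (mu : List B → Option B) (d : G → G → AP) (gg gg' : Idx G) :
    MCterm mu (deltaRow d) 2 gg gg' = tail mu d gg' 2 gg [] := by
  rw [MCterm_two, tail_succ_eq]
  refine lsum_congr fun q1 _ => ?_
  rw [tail_succ_eq]
  refine lsum_congr fun q2 _ => ?_
  rw [tail_zero_eq]
  simp

lemma MCterm_four_tail (mu : List B → Option B) (d : G → G → AP) (gg gg' : Idx G) :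
    MCterm mu (deltaRow d) 4 gg gg' = tail mu d gg' 4 gg [] := by
  rw [MCterm_four, tail_succ_eq]
  refine lsum_congr fun q1 _ => ?_
  rw [tail_succ_eq]
  refine lsum_congr fun q2 _ => ?_
  rw [tail_succ_eq]
  refine lsum_congr fun q3 _ => ?_
  rw [tail_succ_eq]
  refine lsum_congr fun q4 _ => ?_
  rw [tail_zero_eq]
  simp

lemma mu_four_with_endo {mu : List B → Option B} (hmu : IsMu mu) {l : List B}
    (hlab : ∀ b ∈ l, IsLab b) (hlen : l.length = 4) {i : ZMod 4}
    (hmem : B.endo i 0 ∈ l) : mu l = none := by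
  refine mu_labels_eq_none hmu hlab (by omega) ?_ ?_
  · intro i' hE
    rw [hE] at hmem
    obtain ⟨j, hj⟩ := mem_uLoop hmem
    cases hj
  · intro i' hE
    rw [hE] at hmem
    obtain ⟨j, hj⟩ := mem_vLoop hmem
    cases hj

lemma tail_zero {mu : List B → Option B} (hmu : IsMu mu) (d : G → G → AP) (gg' : Idx G) :
    ∀ (r : ℕ) (p : Idx G) (L : List B), (∀ b ∈ L, IsLab b) → L.length + r = 4 →
      (∃ i : ZMod 4, B.endo i 0 ∈ L) → tail mu d gg' r p L = 0 := by
  intro r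
  induction r with
  | zero =>
      intro p L hlab hlen ⟨i, hmem⟩
      rw [tail_zero_eq, mu_four_with_endo hmu hlab (by omega) hmem]
      split <;> simp
  | succ r ih =>
      intro p L hlab hlen ⟨i, hmem⟩
      rw [tail_succ_eq]
      refine lsum_eq_zero fun q hq => ?_
      refine ih q.1 (L ++ [q.2]) ?_ (by simp; omega) ⟨i, by simp [hmem]⟩
      intro b hb
      rcases List.mem_append.mp hb with hb | hb
      · exact hlab b hb
      · rw [List.mem_singleton.mp hb]
        exact deltaRow_label d p q hq

lemma tail_step {mu : List B → Option B} (hmu : IsMu mu) (d : G → G → AP) (gg' : Idx G)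
    (r : ℕ) (p : Idx G) (L : List B) (hlab : ∀ b ∈ L, IsLab b) (hlen : L.length + (r+1) = 4) :
    tail mu d gg' (r+1) p L =
      ((backP p.1).elim 0 fun a1 => tail mu d gg' r (a1, p.2) (L ++ [B.uu (endV p.1) 0]))
    + ((backQ p.1).elim 0 fun a1 => tail mu d gg' r (a1, p.2) (L ++ [B.vv (endV p.1) 0])) := by
  rw [tail_succ_eq, deltaRow_eq, lsum_add, lsum_add, lsum_rowP, lsum_rowQ]
  rw [show lsum (rowF d p) (fun q => tail mu d gg' r q.1 (L ++ [q.2])) = 0 from ?_]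
  · rw [zero_add]
  · refine lsum_eq_zero fun q hq => ?_
    rw [support_rowF hq]
    refine tail_zero hmu d gg' r q.1 (L ++ [B.endo (endV p.1) 0]) ?_ (by simp; omega)
      ⟨endV p.1, by simp⟩
    intro b hb
    rcases List.mem_append.mp hb with hb | hb
    · exact hlab b hb
    · rw [List.mem_singleton.mp hb]
      exact isLab_endo _
end Rows

section MC4
open Stmt15
variable {G : Type} [Fintype G] [DecidableEq G]

lemma endV_shift (i : ZMod 4) (s t : ℤ) : endV (i, s + t) = endV (i, s) + (t : ZMod 4) := by
  unfold endV
  push_cast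
  ring

lemma tail_step' {mu : List B → Option B} (hmu : IsMu mu) (d : G → G → AP) (gg' : Idx G)
    (r : ℕ) (a : PathB) (x : G) (L : List B) (hlab : ∀ b ∈ L, IsLab b)
    (hlen : L.length + (r+1) = 4) :
    tail mu d gg' (r+1) (a, x) L =
      ((backP a).elim 0 fun a1 => tail mu d gg' r (a1, x) (L ++ [B.uu (endV a) 0]))
    + ((backQ a).elim 0 fun a1 => tail mu d gg' r (a1, x) (L ++ [B.vv (endV a) 0])) :=
  tail_step hmu d gg' r (a, x) L hlab hlen

lemma MC4_eval {mu : List B → Option B} (hmu : IsMu mu) (d : G → G → AP)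
    (i : ZMod 4) (s : ℤ) (x : G) (gg' : Idx G) :
    MCterm mu (deltaRow d) 4 ((i, s), x) gg' =
      (if s ≤ -4 ∧ ((i, s + 4), x) = gg'
        then Finsupp.single (B.endo (endV (i, s)) 0) 1 else 0)
    + (if 4 ≤ s ∧ ((i, s - 4), x) = gg'
        then Finsupp.single (B.endo (endV (i, s)) 0) 1 else 0) := by
  have labP : ∀ (L : List B), (∀ b ∈ L, IsLab b) →
      ∀ j : ZMod 4, ∀ b ∈ L ++ [B.uu j 0], IsLab b := by
    intro L hL j b hb
    rcases List.mem_append.mp hb with hb | hb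
    · exact hL b hb
    · rw [List.mem_singleton.mp hb]; exact isLab_uu _
  have labQ : ∀ (L : List B), (∀ b ∈ L, IsLab b) →
      ∀ j : ZMod 4, ∀ b ∈ L ++ [B.vv j 0], IsLab b := by
    intro L hL j b hb
    rcases List.mem_append.mp hb with hb | hb
    · exact hL b hb
    · rw [List.mem_singleton.mp hb]; exact isLab_vv _
  rw [MCterm_four_tail, tail_step' hmu d gg' 3 _ x [] (by simp) (by simp)]
  congr 1
  · -- backP chain
    by_cases h1 : s ≤ -1
    · rw [show backP (i, s) = some (i, s + 1) from by rw [backP_eq, if_pos h1]]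
      simp only [Option.elim_some]
      rw [tail_step' hmu d gg' 2 _ x _ (labP _ (by simp) _) (by simp)]
      rw [show backQ (i, s + 1) = none from by rw [backQ_eq, if_neg (by omega)]]
      simp only [Option.elim_none, add_zero]
      by_cases h2 : s + 1 ≤ -1
      · rw [show backP (i, s + 1) = some (i, s + 1 + 1) from by rw [backP_eq, if_pos h2]]
        simp only [Option.elim_some]
        rw [tail_step' hmu d gg' 1 _ x _ (labP _ (labP _ (by simp) _) _) (by simp)]
        rw [show backQ (i, s + 1 + 1) = none from by rw [backQ_eq, if_neg (by omega)]]
        simp only [Option.elim_none, add_zero]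
        by_cases h3 : s + 1 + 1 ≤ -1
        · rw [show backP (i, s + 1 + 1) = some (i, s + 1 + 1 + 1) from by
            rw [backP_eq, if_pos h3]]
          simp only [Option.elim_some]
          rw [tail_step' hmu d gg' 0 _ x _ (labP _ (labP _ (labP _ (by simp) _) _) _) (by simp)]
          rw [show backQ (i, s + 1 + 1 + 1) = none from by rw [backQ_eq, if_neg (by omega)]]
          simp only [Option.elim_none, add_zero]
          by_cases h4 : s + 1 + 1 + 1 ≤ -1
          · rw [show backP (i, s + 1 + 1 + 1) = some (i, s + 1 + 1 + 1 + 1) from by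
              rw [backP_eq, if_pos h4]]
            simp only [Option.elim_some]
            rw [tail_zero_eq]
            have e1 : endV (i, s + 1) = endV (i, s) + 1 := by
              rw [endV_shift]; norm_num
            have e2 : endV (i, s + 1 + 1) = endV (i, s) + 2 := by
              rw [endV_shift, e1]; norm_num; ring
            have e3 : endV (i, s + 1 + 1 + 1) = endV (i, s) + 3 := by
              rw [endV_shift, e2]; norm_num; ring
            have hL : ([] : List B) ++ [B.uu (endV (i, s)) 0] ++ [B.uu (endV (i, s + 1)) 0]
                ++ [B.uu (endV (i, s + 1 + 1)) 0] ++ [B.uu (endV (i, s + 1 + 1 + 1)) 0]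
                = uLoop (endV (i, s)) 4 := by
              rw [e1, e2, e3, uLoop_four]
              simp
            rw [hL, mu_uLoop hmu]
            have hpt : ((i, s + 1 + 1 + 1 + 1), x) = (((i, s + 4), x) : Idx G) := by
              norm_num; ring
            rw [hpt]
            by_cases hE : (((i, s + 4), x) : Idx G) = gg'
            · rw [if_pos hE, if_pos ⟨by omega, hE⟩]
              rfl
            · rw [if_neg hE, if_neg (by rintro ⟨-, h⟩; exact hE h)]
          · rw [show backP (i, s + 1 + 1 + 1) = none from by rw [backP_eq, if_neg h4]]
            simp only [Option.elim_none, zero_add]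
            rw [if_neg (by rintro ⟨h, -⟩; omega)]
        · rw [show backP (i, s + 1 + 1) = none from by rw [backP_eq, if_neg h3]]
          simp only [Option.elim_none, zero_add]
          rw [if_neg (by rintro ⟨h, -⟩; omega)]
      · rw [show backP (i, s + 1) = none from by rw [backP_eq, if_neg h2]]
        simp only [Option.elim_none, zero_add]
        rw [if_neg (by rintro ⟨h, -⟩; omega)]
    · rw [show backP (i, s) = none from by rw [backP_eq, if_neg h1]]
      simp only [Option.elim_none]
      rw [if_neg (by rintro ⟨h, -⟩; omega)]
  · -- backQ chain
    by_cases h1 : 1 ≤ s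
    · rw [show backQ (i, s) = some (i, s - 1) from by rw [backQ_eq, if_pos h1]]
      simp only [Option.elim_some]
      rw [tail_step' hmu d gg' 2 _ x _ (labQ _ (by simp) _) (by simp)]
      rw [show backP (i, s - 1) = none from by rw [backP_eq, if_neg (by omega)]]
      simp only [Option.elim_none, zero_add]
      by_cases h2 : 1 ≤ s - 1
      · rw [show backQ (i, s - 1) = some (i, s - 1 - 1) from by rw [backQ_eq, if_pos h2]]
        simp only [Option.elim_some]
        rw [tail_step' hmu d gg' 1 _ x _ (labQ _ (labQ _ (by simp) _) _) (by simp)]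
        rw [show backP (i, s - 1 - 1) = none from by rw [backP_eq, if_neg (by omega)]]
        simp only [Option.elim_none, zero_add]
        by_cases h3 : 1 ≤ s - 1 - 1
        · rw [show backQ (i, s - 1 - 1) = some (i, s - 1 - 1 - 1) from by
            rw [backQ_eq, if_pos h3]]
          simp only [Option.elim_some]
          rw [tail_step' hmu d gg' 0 _ x _ (labQ _ (labQ _ (labQ _ (by simp) _) _) _) (by simp)]
          rw [show backP (i, s - 1 - 1 - 1) = none from by rw [backP_eq, if_neg (by omega)]]
          simp only [Option.elim_none, zero_add]
          by_cases h4 : 1 ≤ s - 1 - 1 - 1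
          · rw [show backQ (i, s - 1 - 1 - 1) = some (i, s - 1 - 1 - 1 - 1) from by
              rw [backQ_eq, if_pos h4]]
            simp only [Option.elim_some]
            rw [tail_zero_eq]
            have e1 : endV (i, s - 1) = endV (i, s) - 1 := by
              rw [show s - 1 = s + (-1) from by ring, endV_shift]
              push_cast
              ring
            have e2 : endV (i, s - 1 - 1) = endV (i, s) - 2 := by
              rw [show s - 1 - 1 = s + (-2) from by ring, endV_shift]
              push_cast
              ring
            have e3 : endV (i, s - 1 - 1 - 1) = endV (i, s) - 3 := by
              rw [show s - 1 - 1 - 1 = s + (-3) from by ring, endV_shift]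
              push_cast
              ring
            have hL : ([] : List B) ++ [B.vv (endV (i, s)) 0] ++ [B.vv (endV (i, s - 1)) 0]
                ++ [B.vv (endV (i, s - 1 - 1)) 0] ++ [B.vv (endV (i, s - 1 - 1 - 1)) 0]
                = vLoop (endV (i, s)) 4 := by
              rw [e1, e2, e3, vLoop_four]
              simp
            rw [hL, mu_vLoop hmu]
            have hpt : ((i, s - 1 - 1 - 1 - 1), x) = (((i, s - 4), x) : Idx G) := by
              norm_num; ring
            rw [hpt]
            by_cases hE : (((i, s - 4), x) : Idx G) = gg'
            · rw [if_pos hE, if_pos ⟨by omega, hE⟩]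
              rfl
            · rw [if_neg hE, if_neg (by rintro ⟨-, h⟩; exact hE h)]
          · rw [show backQ (i, s - 1 - 1 - 1) = none from by rw [backQ_eq, if_neg h4]]
            simp only [Option.elim_none, add_zero]
            rw [if_neg (by rintro ⟨h, -⟩; omega)]
        · rw [show backQ (i, s - 1 - 1) = none from by rw [backQ_eq, if_neg h3]]
          simp only [Option.elim_none, add_zero]
          rw [if_neg (by rintro ⟨h, -⟩; omega)]
      · rw [show backQ (i, s - 1) = none from by rw [backQ_eq, if_neg h2]]
        simp only [Option.elim_none, add_zero]
        rw [if_neg (by rintro ⟨h, -⟩; omega)]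
    · rw [show backQ (i, s) = none from by rw [backQ_eq, if_neg h1]]
      simp only [Option.elim_none]
      rw [if_neg (by rintro ⟨h, -⟩; omega)]
end MC4

section MC2
open Stmt15
variable {G : Type} [Fintype G] [DecidableEq G]
variable {M : Type*} [AddCommMonoid M] [Module (ZMod 2) M]

lemma oelim_add {α : Type*} (o : Option α) (f g : α → M) :
    (o.elim 0 fun a => f a + g a) = o.elim 0 f + o.elim 0 g := by
  cases o <;> simp

lemma lsum_add_fun {α : Type*} (f : α →₀ ZMod 2) (φ ψ : α → M) :
    lsum f (fun a => φ a + ψ a) = lsum f φ + lsum f ψ := by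
  unfold lsum
  rw [← Finsupp.sum_add]
  exact Finsupp.sum_congr fun a _ => smul_add _ _ _

lemma lsum_scalar_smul {α : Type*} (f : α →₀ ZMod 2) (σ : α → ZMod 2) (v : M) :
    lsum f (fun a => σ a • v) = (lsum f σ) • v := by
  unfold lsum Finsupp.sum
  rw [Finset.sum_smul]
  refine Finset.sum_congr rfl fun a _ => ?_
  simp only [smul_smul, smul_eq_mul]

lemma zmod2_add_self (X : M) : X + X = 0 := by
  have : X + X = ((1 : ZMod 2) + 1) • X := by rw [add_smul, one_smul]
  rw [this, show (1 : ZMod 2) + 1 = 0 from by decide, zero_smul]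

lemma tail_one_split (mu : List B → Option B) (d : G → G → AP) (gg' : Idx G)
    (p : Idx G) (L : List B) :
    tail mu d gg' 1 p L =
      (∑ y : G, lsum (d p.2 y) fun dc => (frontAct p.1 dc).elim 0 fun a' =>
        if ((a', y) : Idx G) = gg' then toH (mu (L ++ [B.endo (endV p.1) 0])) else 0)
    + ((backP p.1).elim 0 fun a1 =>
        if ((a1, p.2) : Idx G) = gg' then toH (mu (L ++ [B.uu (endV p.1) 0])) else 0)
    + ((backQ p.1).elim 0 fun a1 =>
        if ((a1, p.2) : Idx G) = gg' then toH (mu (L ++ [B.vv (endV p.1) 0])) else 0) := by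
  rw [tail_succ_eq, deltaRow_eq, lsum_add, lsum_add, lsum_rowP, lsum_rowQ, lsum_rowF]
  rfl

/-- the `frontAct`-then-`backP` cross term cancels against `backP`-then-`frontAct` -/
lemma crossP {mu : List B → Option B} (hmu : IsMu mu) (d : G → G → AP) (gg' : Idx G)
    (a : PathB) (x : G) :
    (∑ y : G, lsum (d x y) fun dc => (frontAct a dc).elim 0 fun a1 =>
        (backP a1).elim 0 fun a2 =>
          if ((a2, y) : Idx G) = gg' then toH (mu [B.endo (endV a) 0, B.uu (endV a1) 0]) else 0)
    + ((backP a).elim 0 fun a1 => ∑ y : G, lsum (d x y) fun dc =>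
        (frontAct a1 dc).elim 0 fun a2 =>
          if ((a2, y) : Idx G) = gg' then toH (mu [B.uu (endV a) 0, B.endo (endV a1) 0]) else 0)
    = 0 := by
  have h1 : (∑ y : G, lsum (d x y) fun dc => (frontAct a dc).elim 0 fun a1 =>
        (backP a1).elim 0 fun a2 =>
          if ((a2, y) : Idx G) = gg' then toH (mu [B.endo (endV a) 0, B.uu (endV a1) 0]) else 0)
      = ∑ y : G, lsum (d x y) fun dc => ((frontAct a dc).bind backP).elim 0 fun a2 =>
          if ((a2, y) : Idx G) = gg' then (Finsupp.single (B.uu (endV a) 0) 1 : H) else 0 := by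
    refine Finset.sum_congr rfl fun y _ => lsum_congr fun dc _ => ?_
    cases hf : frontAct a dc with
    | none => rfl
    | some a1 =>
        simp only [Option.elim_some, Option.bind_some]
        have hj := endV_frontAct hf
        simp only [hj, hmu.binary, mu2_eu, eq_self_iff_true, if_true, toH_some]
  have h2 : ((backP a).elim 0 fun a1 => ∑ y : G, lsum (d x y) fun dc =>
        (frontAct a1 dc).elim 0 fun a2 =>
          if ((a2, y) : Idx G) = gg' then toH (mu [B.uu (endV a) 0, B.endo (endV a1) 0]) else 0)
      = ∑ y : G, lsum (d x y) fun dc => ((backP a).bind fun a1 => frontAct a1 dc).elim 0 fun a2 =>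
          if ((a2, y) : Idx G) = gg' then (Finsupp.single (B.uu (endV a) 0) 1 : H) else 0 := by
    cases hb : backP a with
    | none =>
        simp only [Option.elim_none, Option.bind_none]
        rw [eq_comm]
        refine Finset.sum_eq_zero fun y _ => lsum_eq_zero fun dc _ => rfl
    | some a1 =>
        simp only [Option.elim_some, Option.bind_some]
        refine Finset.sum_congr rfl fun y _ => lsum_congr fun dc _ => ?_
        have hj := endV_backP hb
        simp only [hj, hmu.binary, mu2_ue, eq_self_iff_true, if_true, toH_some]
  rw [h1, h2]
  rw [show (∑ y : G, lsum (d x y) fun dc => ((backP a).bind fun a1 => frontAct a1 dc).elim 0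
      fun a2 => if ((a2, y) : Idx G) = gg' then (Finsupp.single (B.uu (endV a) 0) 1 : H) else 0)
    = ∑ y : G, lsum (d x y) fun dc => ((frontAct a dc).bind backP).elim 0 fun a2 =>
        if ((a2, y) : Idx G) = gg' then (Finsupp.single (B.uu (endV a) 0) 1 : H) else 0 from by
    refine Finset.sum_congr rfl fun y _ => lsum_congr fun dc _ => ?_
    rw [front_backP]]
  exact zmod2_add_self _

lemma crossQ {mu : List B → Option B} (hmu : IsMu mu) (d : G → G → AP) (gg' : Idx G)
    (a : PathB) (x : G) :
    (∑ y : G, lsum (d x y) fun dc => (frontAct a dc).elim 0 fun a1 =>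
        (backQ a1).elim 0 fun a2 =>
          if ((a2, y) : Idx G) = gg' then toH (mu [B.endo (endV a) 0, B.vv (endV a1) 0]) else 0)
    + ((backQ a).elim 0 fun a1 => ∑ y : G, lsum (d x y) fun dc =>
        (frontAct a1 dc).elim 0 fun a2 =>
          if ((a2, y) : Idx G) = gg' then toH (mu [B.vv (endV a) 0, B.endo (endV a1) 0]) else 0)
    = 0 := by
  have h1 : (∑ y : G, lsum (d x y) fun dc => (frontAct a dc).elim 0 fun a1 =>
        (backQ a1).elim 0 fun a2 =>
          if ((a2, y) : Idx G) = gg' then toH (mu [B.endo (endV a) 0, B.vv (endV a1) 0]) else 0)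
      = ∑ y : G, lsum (d x y) fun dc => ((frontAct a dc).bind backQ).elim 0 fun a2 =>
          if ((a2, y) : Idx G) = gg' then (Finsupp.single (B.vv (endV a) 0) 1 : H) else 0 := by
    refine Finset.sum_congr rfl fun y _ => lsum_congr fun dc _ => ?_
    cases hf : frontAct a dc with
    | none => rfl
    | some a1 =>
        simp only [Option.elim_some, Option.bind_some]
        have hj := endV_frontAct hf
        simp only [hj, hmu.binary, mu2_ev, eq_self_iff_true, if_true, toH_some]
  have h2 : ((backQ a).elim 0 fun a1 => ∑ y : G, lsum (d x y) fun dc =>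
        (frontAct a1 dc).elim 0 fun a2 =>
          if ((a2, y) : Idx G) = gg' then toH (mu [B.vv (endV a) 0, B.endo (endV a1) 0]) else 0)
      = ∑ y : G, lsum (d x y) fun dc => ((backQ a).bind fun a1 => frontAct a1 dc).elim 0 fun a2 =>
          if ((a2, y) : Idx G) = gg' then (Finsupp.single (B.vv (endV a) 0) 1 : H) else 0 := by
    cases hb : backQ a with
    | none =>
        simp only [Option.elim_none, Option.bind_none]
        rw [eq_comm]
        refine Finset.sum_eq_zero fun y _ => lsum_eq_zero fun dc _ => rfl
    | some a1 =>
        simp only [Option.elim_some, Option.bind_some]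
        refine Finset.sum_congr rfl fun y _ => lsum_congr fun dc _ => ?_
        have hj := endV_backQ hb
        simp only [hj, hmu.binary, mu2_ve, eq_self_iff_true, if_true, toH_some]
  rw [h1, h2]
  rw [show (∑ y : G, lsum (d x y) fun dc => ((backQ a).bind fun a1 => frontAct a1 dc).elim 0
      fun a2 => if ((a2, y) : Idx G) = gg' then (Finsupp.single (B.vv (endV a) 0) 1 : H) else 0)
    = ∑ y : G, lsum (d x y) fun dc => ((frontAct a dc).bind backQ).elim 0 fun a2 =>
        if ((a2, y) : Idx G) = gg' then (Finsupp.single (B.vv (endV a) 0) 1 : H) else 0 from by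
    refine Finset.sum_congr rfl fun y _ => lsum_congr fun dc _ => ?_
    rw [front_backQ]]
  exact zmod2_add_self _

lemma termPP {mu : List B → Option B} (hmu : IsMu mu) (gg' : Idx G) (a : PathB) (x : G) :
    ((backP a).elim 0 fun a1 => (backP a1).elim 0 fun a2 =>
      if ((a2, x) : Idx G) = gg' then toH (mu [B.uu (endV a) 0, B.uu (endV a1) 0]) else 0) = 0 := by
  cases backP a with
  | none => rfl
  | some a1 =>
      simp only [Option.elim_some]
      cases backP a1 with
      | none => rfl
      | some a2 =>
          simp only [Option.elim_some]
          rw [hmu.binary, mu2_uu]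
          split <;> rfl

lemma termQQ {mu : List B → Option B} (hmu : IsMu mu) (gg' : Idx G) (a : PathB) (x : G) :
    ((backQ a).elim 0 fun a1 => (backQ a1).elim 0 fun a2 =>
      if ((a2, x) : Idx G) = gg' then toH (mu [B.vv (endV a) 0, B.vv (endV a1) 0]) else 0) = 0 := by
  cases backQ a with
  | none => rfl
  | some a1 =>
      simp only [Option.elim_some]
      cases backQ a1 with
      | none => rfl
      | some a2 =>
          simp only [Option.elim_some]
          rw [hmu.binary, mu2_vv]
          split <;> rfl

lemma termPQ (mu : List B → Option B) (gg' : Idx G) (a : PathB) (x : G) :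
    ((backP a).elim 0 fun a1 => (backQ a1).elim 0 fun a2 =>
      if ((a2, x) : Idx G) = gg' then toH (mu [B.uu (endV a) 0, B.vv (endV a1) 0]) else 0) = 0 := by
  cases hb : backP a with
  | none => rfl
  | some a1 =>
      simp only [Option.elim_some]
      rw [backQ_backP hb]
      rfl

lemma termQP (mu : List B → Option B) (gg' : Idx G) (a : PathB) (x : G) :
    ((backQ a).elim 0 fun a1 => (backP a1).elim 0 fun a2 =>
      if ((a2, x) : Idx G) = gg' then toH (mu [B.vv (endV a) 0, B.uu (endV a1) 0]) else 0) = 0 := by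
  cases hb : backQ a with
  | none => rfl
  | some a1 =>
      simp only [Option.elim_some]
      rw [backP_backQ hb]
      rfl

lemma FF_eval {mu : List B → Option B} (hmu : IsMu mu) (d : G → G → AP)
    (idem : G → ZMod 4)
    (hcurv : ∀ x z : G,
        (∑ y : G, mulAP (d x y) (d y z)) =
          if x = z then
            Finsupp.single ((idem x, (4 : ℤ)) : PathB) (1 : ZMod 2)
              + Finsupp.single ((idem x, (-4 : ℤ)) : PathB) (1 : ZMod 2)
          else 0)
    (gg' : Idx G) (a : PathB) (x : G) (ha : a.1 = idem x) :
    (∑ y : G, lsum (d x y) fun dc => (frontAct a dc).elim 0 fun a1 =>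
      ∑ z : G, lsum (d y z) fun dc' => (frontAct a1 dc').elim 0 fun a2 =>
        if ((a2, z) : Idx G) = gg' then toH (mu [B.endo (endV a) 0, B.endo (endV a1) 0]) else 0)
    = (if 4 ≤ a.2 ∧ ((a.1, a.2 - 4), x) = gg'
        then Finsupp.single (B.endo (endV a) 0) 1 else 0)
    + (if a.2 ≤ -4 ∧ ((a.1, a.2 + 4), x) = gg'
        then Finsupp.single (B.endo (endV a) 0) 1 else 0) := by
  classical
  set v : H := Finsupp.single (B.endo (endV a) 0) 1 with hv
  have hstep1 : (∑ y : G, lsum (d x y) fun dc => (frontAct a dc).elim 0 fun a1 =>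
      ∑ z : G, lsum (d y z) fun dc' => (frontAct a1 dc').elim 0 fun a2 =>
        if ((a2, z) : Idx G) = gg' then toH (mu [B.endo (endV a) 0, B.endo (endV a1) 0]) else 0)
      = (∑ y : G, lsum (d x y) fun dc => lsum (d y gg'.2) fun dc' =>
          if ((frontAct a dc).bind fun a1 => frontAct a1 dc') = some gg'.1
            then (1 : ZMod 2) else 0) • v := by
    rw [Finset.sum_smul]
    refine Finset.sum_congr rfl fun y _ => ?_
    rw [← lsum_scalar_smul]
    refine lsum_congr fun dc _ => ?_
    cases hf : frontAct a dc with
    | none =>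
        simp only [Option.elim_none, Option.bind_none]
        rw [lsum_eq_zero fun dc' _ => show (if (none : Option PathB) = some gg'.1
          then (1 : ZMod 2) else 0) = 0 from by simp, zero_smul]
    | some a1 =>
        simp only [Option.elim_some, Option.bind_some]
        have hj := endV_frontAct hf
        simp only [hj, hmu.binary, mu2_ee, eq_self_iff_true, if_true, toH_some]
        rw [← lsum_scalar_smul]
        refine (Finset.sum_eq_single_of_mem gg'.2 (Finset.mem_univ _)
          fun z _ hz => lsum_eq_zero fun dc' _ => ?_).trans ?_
        · cases frontAct a1 dc' with
          | none => rfl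
          | some a2 => exact if_neg fun hP => hz (congrArg Prod.snd hP)
        · have hpt : ∀ o : Option PathB,
              (o.elim 0 fun a2 => if ((a2, gg'.2) : Idx G) = gg' then v else 0)
                = (if o = some gg'.1 then (1 : ZMod 2) else 0) • v := by
            intro o
            cases o with
            | none => simp
            | some a2 =>
                simp only [Option.elim_some]
                by_cases he : a2 = gg'.1
                · rw [if_pos (show ((a2, gg'.2) : Idx G) = gg' from by rw [he]),
                    if_pos (by rw [he]), one_smul]
                · rw [if_neg (fun hP => he (congrArg Prod.fst hP)),
                    if_neg (fun hS => he (Option.some.inj hS)), zero_smul]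
          exact lsum_congr fun dc' _ => hpt _
  rw [hstep1]
  have hstep2 : (∑ y : G, lsum (d x y) fun dc => lsum (d y gg'.2) fun dc' =>
      if ((frontAct a dc).bind fun a1 => frontAct a1 dc') = some gg'.1
        then (1 : ZMod 2) else 0)
      = lsum (∑ y : G, mulAP (d x y) (d y gg'.2))
          (fun e => if frontAct a e = some gg'.1 then (1 : ZMod 2) else 0) := by
    rw [lsum_finsetSum]
    refine Finset.sum_congr rfl fun y _ => ?_
    rw [mulAP_eq, lsum_lsum]
    refine lsum_congr fun dc _ => ?_
    rw [lsum_lsum]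
    refine lsum_congr fun dc' _ => ?_
    rw [front_front]
    cases mulP dc dc' with
    | none => simp
    | some e => simp only [Option.bind_some, toAP_some, lsum_single, one_smul]
  rw [hstep2, hcurv x gg'.2, ← ha]
  by_cases hx : x = gg'.2
  · rw [if_pos hx, lsum_add, lsum_single, lsum_single, one_smul, one_smul]
    rw [frontAct_q4, frontAct_p4]
    have key : ∀ (c : Prop) (inst : Decidable c) (w : PathB),
        (if (if c then some w else none) = some gg'.1 then (1 : ZMod 2) else 0)
          = if c ∧ ((w, x) : Idx G) = gg' then 1 else 0 := by
      intro c inst w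
      by_cases hc : c
      · rw [if_pos hc]
        by_cases hw : w = gg'.1
        · rw [if_pos (by rw [hw]), if_pos ⟨hc, by rw [hw, hx]⟩]
        · rw [if_neg (fun hS => hw (Option.some.inj hS)),
            if_neg (fun h => hw (congrArg Prod.fst h.2))]
      · simp [hc]
    rw [key, key, add_smul, ite_smul, ite_smul, one_smul, zero_smul]
  · rw [if_neg hx, lsum_zero, zero_smul]
    rw [if_neg (by rintro ⟨-, h⟩; exact hx (congrArg Prod.snd h)),
        if_neg (by rintro ⟨-, h⟩; exact hx (congrArg Prod.snd h))]
    rw [add_zero]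

end MC2

section MC2b
open Stmt15
variable {G : Type} [Fintype G] [DecidableEq G]
variable {M : Type*} [AddCommMonoid M] [Module (ZMod 2) M]

lemma zmod2_cancel {X Y : M} (h : X + Y = 0) : Y = X := by
  calc Y = (X + Y) + Y := by rw [h, zero_add]
  _ = X + (Y + Y) := by rw [add_assoc]
  _ = X := by rw [zmod2_add_self, add_zero]

lemma zmod2_rearrange (W Y Z : M) : (W + Y + Z) + Y + Z = W := by
  rw [show (W + Y + Z) + Y + Z = W + ((Y + Y) + (Z + Z)) from by abel,
    zmod2_add_self, zmod2_add_self, add_zero, add_zero]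

lemma MC2_eval {mu : List B → Option B} (hmu : IsMu mu) (d : G → G → AP)
    (idem : G → ZMod 4)
    (hcurv : ∀ x z : G,
        (∑ y : G, mulAP (d x y) (d y z)) =
          if x = z then
            Finsupp.single ((idem x, (4 : ℤ)) : PathB) (1 : ZMod 2)
              + Finsupp.single ((idem x, (-4 : ℤ)) : PathB) (1 : ZMod 2)
          else 0)
    (gg' : Idx G) (a : PathB) (x : G) (ha : a.1 = idem x) :
    MCterm mu (deltaRow d) 2 ((a, x) : Idx G) gg' =
      (if 4 ≤ a.2 ∧ ((a.1, a.2 - 4), x) = gg'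
        then Finsupp.single (B.endo (endV a) 0) 1 else 0)
    + (if a.2 ≤ -4 ∧ ((a.1, a.2 + 4), x) = gg'
        then Finsupp.single (B.endo (endV a) 0) 1 else 0) := by
  rw [MCterm_two_tail, tail_succ_eq, deltaRow_eq, lsum_add, lsum_add]
  simp only [lsum_rowF, lsum_rowP, lsum_rowQ, tail_one_split, List.nil_append,
    List.cons_append, oelim_add, lsum_add_fun, Finset.sum_add_distrib]
  rw [termPP hmu gg' a x, termQQ hmu gg' a x, termPQ mu gg' a x, termQP mu gg' a x,
    FF_eval hmu d idem hcurv gg' a x ha]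
  rw [zmod2_cancel (crossP hmu d gg' a x), zmod2_cancel (crossQ hmu d gg' a x)]
  simp only [add_zero]
  exact zmod2_rearrange _ _ _
end MC2b

open Stmt15 in
theorem stmt15
    -- the A∞-operations of `𝒜`:
    (mu : List B → Option B) (hmu : IsMu mu)
    -- a (finitely generated) peculiar module M, given by generators `G`,
    -- idempotents `idem` and differential coefficients `d`:
    (G : Type) [Fintype G] [DecidableEq G]
    (idem : G → ZMod 4) (d : G → G → AP)
    -- the coefficients of ∂_M are paths from `idem x` to `idem y`:
    (hsupp : ∀ x y : G, ∀ dc ∈ (d x y).support, dc.1 = idem x ∧ endV dc = idem y)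
    -- the curvature: ∂_M² = (p⁴ + q⁴) ⊗ 1:
    (hcurv : ∀ x z : G,
        (∑ y : G, mulAP (d x y) (d y z)) =
          if x = z then
            Finsupp.single ((idem x, (4 : ℤ)) : PathB) (1 : ZMod 2)
              + Finsupp.single ((idem x, (-4 : ℤ)) : PathB) (1 : ZMod 2)
          else 0) :
    -- the Maurer–Cartan equation for `𝓛(M)`, entrywise (the sum stabilises for N ≥ 4):
    ∀ gg : Idx G, gg.1.1 = idem gg.2 →
      ∀ (gg' : Idx G) (N : ℕ), 4 ≤ N →
        ∑ k ∈ Finset.Icc 1 N, MCterm mu (deltaRow d) k gg gg' = 0 := by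
  intro gg hidem gg' N hN
  obtain ⟨a, x⟩ := gg
  have hrow : ∀ p qq, qq ∈ (deltaRow d p).support → IsLab qq.2 :=
    fun p qq h => deltaRow_label d p qq h
  have hsub : ({2, 4} : Finset ℕ) ⊆ Finset.Icc 1 N := by
    intro k hk
    simp only [Finset.mem_insert, Finset.mem_singleton] at hk
    rcases hk with rfl | rfl <;> (rw [Finset.mem_Icc]; omega)
  rw [← Finset.sum_subset hsub (fun k _ hk' => by
    simp only [Finset.mem_insert, Finset.mem_singleton] at hk'
    push_neg at hk'
    exact MCterm_vanish hmu hrow k hk'.1 hk'.2 (a, x) gg')]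
  rw [Finset.sum_insert (by simp), Finset.sum_singleton]
  rw [MC2_eval hmu d idem hcurv gg' a x hidem,
    MC4_eval hmu d a.1 a.2 x gg']
  rw [show ((a.1, a.2) : PathB) = a from rfl]
  rw [show (if 4 ≤ a.2 ∧ ((a.1, a.2 - 4), x) = gg'
        then (Finsupp.single (B.endo (endV a) 0) 1 : H) else 0)
    + (if a.2 ≤ -4 ∧ ((a.1, a.2 + 4), x) = gg'
        then (Finsupp.single (B.endo (endV a) 0) 1 : H) else 0)
    + ((if a.2 ≤ -4 ∧ ((a.1, a.2 + 4), x) = gg'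
        then (Finsupp.single (B.endo (endV a) 0) 1 : H) else 0)
    + (if 4 ≤ a.2 ∧ ((a.1, a.2 - 4), x) = gg'
        then (Finsupp.single (B.endo (endV a) 0) 1 : H) else 0))
    = ((if 4 ≤ a.2 ∧ ((a.1, a.2 - 4), x) = gg'
        then (Finsupp.single (B.endo (endV a) 0) 1 : H) else 0)
      + (if 4 ≤ a.2 ∧ ((a.1, a.2 - 4), x) = gg'
        then (Finsupp.single (B.endo (endV a) 0) 1 : H) else 0))
    + ((if a.2 ≤ -4 ∧ ((a.1, a.2 + 4), x) = gg'
        then (Finsupp.single (B.endo (endV a) 0) 1 : H) else 0)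
      + (if a.2 ≤ -4 ∧ ((a.1, a.2 + 4), x) = gg'
        then (Finsupp.single (B.endo (endV a) 0) 1 : H) else 0)) from by abel]
  rw [zmod2_add_self, zmod2_add_self, add_zero]
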